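/- For an image-finite LTS, the complement of the apartness relation # is a strong bisimulation; hence the complement of bisimilarity is contained in apartness. -/

import Mathlib

/-- A symmetric relation `R` is a strong bisimulation on the LTS `(X, A, tr)`. -/
def IsBisimulation {X A : Type} (tr : X → A → X → Prop) (R : X → X → Prop) : Prop :=
  Symmetric R ∧ ∀ x y, R x y → ∀ a x', tr x a x' → ∃ y', tr y a y' ∧ R x' y'

/-- Strong bisimilarity: the union of all strong bisimulations. -/
def Bisimilar {X A : Type} (tr : X → A → X → Prop) (x y : X) : Prop :=
  ∃ R, IsBisimulation tr R ∧ R x y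

/-- A symmetric relation `R` is an apartness relation on the LTS `(X, A, tr)`. -/
def IsApartnessRel {X A : Type} (tr : X → A → X → Prop) (R : X → X → Prop) : Prop :=
  Symmetric R ∧ ∀ x y a x', tr x a x' → (∀ y', tr y a y' → R x' y') → R x y

/-- Apartness: the intersection of all apartness relations. -/
def Apart {X A : Type} (tr : X → A → X → Prop) (x y : X) : Prop :=
  ∀ R, IsApartnessRel tr R → R x y

/-- An LTS is image-finite if every state has finitely many `a`-successors, for each `a`. -/
def ImageFinite {X A : Type} (tr : X → A → X → Prop) : Prop :=
  ∀ x a, {x' | tr x a x'}.Finite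

theorem not_apart_isBisimulation {X A : Type} (tr : X → A → X → Prop)
    (h : ImageFinite tr) :
    IsBisimulation tr (fun x y => ¬ Apart tr x y) ∧
      ∀ x y, ¬ Bisimilar tr x y → Apart tr x y := by
  have hsym : Symmetric (fun x y => ¬ Apart tr x y) := by
    intro x y hxy hyx
    exact hxy (fun R hR => hR.1 (hyx R hR))
  have hbis : IsBisimulation tr (fun x y => ¬ Apart tr x y) := by
    refine ⟨hsym, ?_⟩
    intro x y hxy a x' hx'
    by_contra hne
    push_neg at hne
    apply hxy
    intro R hR
    exact hR.2 x y a x' hx' (fun y' hy' => (hne y' hy') R hR)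
  refine ⟨hbis, ?_⟩
  intro x y hnb
  by_contra hna
  exact hnb ⟨_, hbis, hna⟩
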